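/- arXiv:1403.1457 — 2 statements merged into one kernel-verified Lean document; each statement's English description precedes it below -/
import Mathlib

section
/- Let n ≥ 4, let (e_1, …, e_n) be a frame of successive minima for a lattice Λ in an n-dimensional real inner product space, let Λ' be the ℤ-span of the e_i, set e = (e_1 + ⋯ + e_n)/2 and assume Λ = Λ' + ℤ·e. Then N(e) ≤ (n(n+1)/8)·N(e_n); moreover N(e) ≤ N(e_4) if n = 4, N(e) ≤ (5/2)·N(e_5) if n = 5, and N(e) ≤ 4·N(e_6) if n = 6. -/
open scoped BigOperators
noncomputable section

variable {E : Type*} [NormedAddCommGroup E] [InnerProductSpace ℝ E]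

/-- `Nm x = ⟪x, x⟫`, the square of the usual norm. -/
def Nm (x : E) : ℝ := inner ℝ x x

/-- Gram determinant of a family of vectors. -/
def gramDet {n : ℕ} (v : Fin n → E) : ℝ :=
  (Matrix.of fun i j : Fin n => (inner ℝ (v i) (v j) : ℝ)).det

/-- `v` is a ℤ-basis of `Λ`: ℝ-linearly independent and ℤ-spanning `Λ`. -/
def IsZBasis {n : ℕ} (Λ : Submodule ℤ E) (v : Fin n → E) : Prop :=
  LinearIndependent ℝ v ∧ Submodule.span ℤ (Set.range v) = Λ

/-- `Λ` is a lattice in the `n`-dimensional space `E`: the ℤ-span of an ℝ-basis of `E`. -/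
def IsLattice (n : ℕ) (Λ : Submodule ℤ E) : Prop :=
  ∃ v : Fin n → E, Submodule.span ℝ (Set.range v) = ⊤ ∧ IsZBasis Λ v

/-- The determinant of a lattice: the (common) Gram determinant of any of its ℤ-bases. -/
def latDet (n : ℕ) (Λ : Submodule ℤ E) : ℝ :=
  sSup { d : ℝ | ∃ v : Fin n → E, IsZBasis Λ v ∧ d = gramDet v }

/-- `Hb`: infimum of `N(e₁)⋯N(eₙ)/det Λ` over ℤ-bases of `Λ`. -/
def Hb (n : ℕ) (Λ : Submodule ℤ E) : ℝ :=
  sInf { q : ℝ | ∃ v : Fin n → E, IsZBasis Λ v ∧ q = (∏ i, Nm (v i)) / latDet n Λ }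

/-- `Mlat`: infimum of `N(e₁)⋯N(eₙ)/det Λ` over linearly independent tuples in `Λ`. -/
def Mlat (n : ℕ) (Λ : Submodule ℤ E) : ℝ :=
  sInf { q : ℝ | ∃ v : Fin n → E, (∀ i, v i ∈ Λ) ∧ LinearIndependent ℝ v ∧
    q = (∏ i, Nm (v i)) / latDet n Λ }

/-- `Qb Λ = Hb Λ / M Λ`. -/
def Qb (n : ℕ) (Λ : Submodule ℤ E) : ℝ := Hb n Λ / Mlat n Λ

/-- `succMin Λ k`: the least `r` such that `Λ` contains `k` linearly independent
vectors of norm `N ≤ r` (the `k`-th successive minimum `λ_k(Λ)`). -/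
def succMin (Λ : Submodule ℤ E) (k : ℕ) : ℝ :=
  sInf { r : ℝ | ∃ w : Fin k → E, (∀ j, w j ∈ Λ) ∧ LinearIndependent ℝ w ∧ ∀ j, Nm (w j) ≤ r }

/-- `(v 0, …, v (n-1))` is a frame of successive minima for `Λ`. -/
def IsSuccMinFrame {n : ℕ} (Λ : Submodule ℤ E) (v : Fin n → E) : Prop :=
  (∀ i, v i ∈ Λ) ∧ LinearIndependent ℝ v ∧ ∀ i : Fin n, Nm (v i) = succMin Λ ((i : ℕ) + 1)

/-- Two lattices are similar if one is the image of the other under a nonzero scalar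
multiple of a linear isometry. -/
def LatSimilar {F : Type*} [NormedAddCommGroup F] [InnerProductSpace ℝ F]
    (L : Submodule ℤ F) (Λ : Submodule ℤ E) : Prop :=
  ∃ (c : ℝ) (f : F ≃ₗᵢ[ℝ] E), c ≠ 0 ∧
    Λ = Submodule.map ((c • (f.toLinearEquiv : F →ₗ[ℝ] E)).restrictScalars ℤ) L

/-- The centred cubic lattice `Cₙ = ℤⁿ + ℤ·(ε₁+⋯+εₙ)/2` in `ℝⁿ`. -/
def centredCubic (n : ℕ) : Submodule ℤ (EuclideanSpace ℝ (Fin n)) :=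
  Submodule.span ℤ (Set.range (fun i : Fin n => EuclideanSpace.single i (1 : ℝ)) ∪
    {(WithLp.equiv 2 (Fin n → ℝ)).symm fun _ => 2⁻¹})

/-- `Λ` is a centred cubic lattice: it is similar to `Cₙ`. -/
def IsCentredCubic (n : ℕ) (Λ : Submodule ℤ E) : Prop :=
  LatSimilar (centredCubic n) Λ

/-- The index `[Λ : Λ']` of a sublattice. -/
def subIndex (Λ' Λ : Submodule ℤ E) : ℕ :=
  (Λ'.toAddSubgroup.addSubgroupOf Λ.toAddSubgroup).index

/-- The minimum of a lattice: `min{N(x) : x ∈ Λ, x ≠ 0}`. -/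
def minNorm (Λ : Submodule ℤ E) : ℝ :=
  sInf { r : ℝ | ∃ x ∈ Λ, x ≠ 0 ∧ r = Nm x }

lemma Nm_nonneg (x : E) : 0 ≤ Nm x := real_inner_self_nonneg

lemma Nm_sum {n : ℕ} (e : Fin n → E) (c : Fin n → ℝ) :
    Nm (∑ i, c i • e i) = ∑ i, ∑ j, c i * c j * (inner ℝ (e i) (e j) : ℝ) := by
  simp only [Nm, sum_inner, inner_sum, real_inner_smul_left, real_inner_smul_right, mul_assoc]
  exact Finset.sum_congr rfl fun i _ => Finset.sum_congr rfl fun j _ => by rw [real_inner_comm]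

lemma succMin_le (Λ : Submodule ℤ E) {k : ℕ} (hk : 0 < k) (w : Fin k → E)
    (h1 : ∀ j, w j ∈ Λ) (h2 : LinearIndependent ℝ w) {r : ℝ} (h3 : ∀ j, Nm (w j) ≤ r) :
    succMin Λ k ≤ r := by
  refine csInf_le ⟨0, ?_⟩ ⟨w, h1, h2, h3⟩
  rintro s ⟨u, -, -, hu⟩
  exact le_trans (Nm_nonneg (u ⟨0, hk⟩)) (hu ⟨0, hk⟩)

lemma succMin_mono (Λ : Submodule ℤ E) {n : ℕ} (e : Fin n → E)
    (hmem : ∀ i, e i ∈ Λ) (hli : LinearIndependent ℝ e)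
    {a b : ℕ} (ha : 0 < a) (hab : a ≤ b) (hbn : b ≤ n) :
    succMin Λ a ≤ succMin Λ b := by
  apply le_csInf
  · refine ⟨∑ i, Nm (e i), fun i : Fin b => e (Fin.castLE hbn i), fun j => hmem _,
      hli.comp _ (Fin.castLE_injective hbn), fun j => ?_⟩
    exact Finset.single_le_sum (fun i _ => Nm_nonneg (e i)) (Finset.mem_univ _)
  · rintro r ⟨w, h1, h2, h3⟩
    exact succMin_le Λ ha (fun i : Fin a => w (Fin.castLE hab i)) (fun j => h1 _)
      (h2.comp _ (Fin.castLE_injective hab)) (fun j => h3 _)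

lemma sum_smul_not_mem_span {n : ℕ} {e : Fin n → E} (hli : LinearIndependent ℝ e)
    {s : Set (Fin n)} {t : Fin n} (ht : t ∉ s) {c : Fin n → ℝ} (hct : c t ≠ 0) :
    (∑ i, c i • e i) ∉ Submodule.span ℝ (e '' s) := by
  intro hx
  set T := Submodule.span ℝ (e '' {i | i ≠ t}) with hT
  have hsub : Submodule.span ℝ (e '' s) ≤ T :=
    Submodule.span_mono (Set.image_mono fun i his hit => ht (hit ▸ his))
  have hx' : (∑ i, c i • e i) ∈ T := hsub hx
  have hsum : (∑ i ∈ Finset.univ.erase t, c i • e i) ∈ T :=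
    Submodule.sum_mem _ fun i hi => Submodule.smul_mem _ _
      (Submodule.subset_span ⟨i, Finset.ne_of_mem_erase hi, rfl⟩)
  have het : c t • e t ∈ T := by
    have h2 : c t • e t = (∑ i, c i • e i) - ∑ i ∈ Finset.univ.erase t, c i • e i := by
      rw [← Finset.add_sum_erase Finset.univ (fun i => c i • e i) (Finset.mem_univ t)]
      abel
    rw [h2]; exact Submodule.sub_mem _ hx' hsum
  have : e t ∈ T := by
    have h3 := Submodule.smul_mem T (c t)⁻¹ het
    rwa [inv_smul_smul₀ hct] at h3
  exact hli.notMem_span_image (by simp : t ∉ {i | i ≠ t}) this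

omit [NormedAddCommGroup E] [InnerProductSpace ℝ E] in
lemma range_castLE_image {n : ℕ} (e : Fin n → E) (m : ℕ) (hm : m ≤ n) :
    Set.range (fun k : Fin m => e (Fin.castLE hm k)) = e '' {i : Fin n | (i : ℕ) < m} := by
  ext y
  constructor
  · rintro ⟨k, rfl⟩
    exact ⟨Fin.castLE hm k, k.isLt, rfl⟩
  · rintro ⟨i, hi, rfl⟩
    exact ⟨⟨i.1, hi⟩, rfl⟩

lemma succMin_le_of_not_mem_span (Λ : Submodule ℤ E) {n : ℕ} (e : Fin n → E)
    (hmem : ∀ i, e i ∈ Λ) (hli : LinearIndependent ℝ e)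
    (hN : ∀ i : Fin n, Nm (e i) = succMin Λ ((i : ℕ) + 1)) :
    ∀ (m : ℕ), m < n → ∀ x : E, x ∈ Λ →
      x ∉ Submodule.span ℝ (e '' {i : Fin n | (i : ℕ) < m}) → succMin Λ (m + 1) ≤ Nm x := by
  intro m
  induction m with
  | zero =>
    intro hm x hxΛ hxs
    have hx0 : x ≠ 0 := by
      intro h
      apply hxs
      rw [h]; exact Submodule.zero_mem _
    refine succMin_le Λ one_pos (fun _ : Fin 1 => x) (fun _ => hxΛ) ?_ (fun _ => le_refl _)
    exact linearIndependent_unique_iff.2 hx0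
  | succ m ih =>
    intro hm x hxΛ hxs
    have hIH : succMin Λ (m + 1) ≤ Nm x := by
      refine ih (by omega) x hxΛ (fun h => hxs ?_)
      exact Submodule.span_mono (Set.image_mono fun i hi => lt_trans hi (Nat.lt_succ_self m)) h
    have hm' : m + 1 ≤ n := le_of_lt hm
    have hx' : x ∉ Submodule.span ℝ
        (Set.range (fun k : Fin (m + 1) => e (Fin.castLE hm' k))) := by
      rw [range_castLE_image]; exact hxs
    set w : Fin (m + 2) → E := Fin.snoc (fun k : Fin (m + 1) => e (Fin.castLE hm' k)) x with hw
    have hwli : LinearIndependent ℝ w :=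
      linearIndependent_fin_snoc.2 ⟨hli.comp _ (Fin.castLE_injective hm'), hx'⟩
    have hwmem : ∀ j, w j ∈ Λ := by
      intro j
      refine Fin.lastCases ?_ ?_ j
      · rw [hw]; simp only [Fin.snoc_last]; exact hxΛ
      · intro k; rw [hw]; simp only [Fin.snoc_castSucc]; exact hmem _
    have hwbd : ∀ j, Nm (w j) ≤ max (succMin Λ (m + 1)) (Nm x) := by
      intro j
      refine Fin.lastCases ?_ ?_ j
      · rw [hw]; simp only [Fin.snoc_last]; exact le_max_right _ _
      · intro k
        rw [hw]; simp only [Fin.snoc_castSucc]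
        refine le_trans ?_ (le_max_left _ _)
        rw [hN]
        exact succMin_mono Λ e hmem hli (Nat.succ_pos _) (by
          have := k.isLt; simp only [Fin.coe_castLE]; omega) (by omega)
    have h2 : succMin Λ (m + 2) ≤ max (succMin Λ (m + 1)) (Nm x) :=
      succMin_le Λ (by omega) w hwmem hwli hwbd
    exact le_trans h2 (max_le hIH (le_refl _))

lemma key_ineq (Λ : Submodule ℤ E) {n : ℕ} (e : Fin n → E)
    (hmem : ∀ i, e i ∈ Λ) (hli : LinearIndependent ℝ e)
    (hN : ∀ i : Fin n, Nm (e i) = succMin Λ ((i : ℕ) + 1))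
    (m : ℕ) (hm : m < n) (x : E) (hxΛ : x ∈ Λ) (c : Fin n → ℝ)
    (hxc : x = ∑ i, c i • e i) (hc : c ⟨m, hm⟩ ≠ 0) :
    Nm (e ⟨m, hm⟩) ≤ Nm x := by
  rw [hN ⟨m, hm⟩]
  refine succMin_le_of_not_mem_span Λ e hmem hli hN m hm x hxΛ ?_
  rw [hxc]
  exact sum_smul_not_mem_span hli (by simp : (⟨m, hm⟩ : Fin n) ∉ {i : Fin n | (i : ℕ) < m}) hc

lemma pair_ineq (Λ : Submodule ℤ E) {n : ℕ} (e : Fin n → E)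
    (hmem : ∀ i, e i ∈ Λ) (hli : LinearIndependent ℝ e)
    (hN : ∀ i : Fin n, Nm (e i) = succMin Λ ((i : ℕ) + 1))
    (i j : Fin n) (hij : i < j) :
    2 * (inner ℝ (e i) (e j) : ℝ) ≤ Nm (e i) := by
  have hxc : e j - e i = ∑ k, ((if k = j then (1 : ℝ) else 0) - (if k = i then 1 else 0)) • e k := by
    simp only [sub_smul, Finset.sum_sub_distrib, ite_smul, one_smul, zero_smul,
      Finset.sum_ite_eq', Finset.mem_univ, if_true]
  have hkey := key_ineq Λ e hmem hli hN j.1 j.isLt (e j - e i)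
    (Submodule.sub_mem _ (hmem j) (hmem i)) _ hxc (by
      simp only [Fin.eta, if_pos rfl, if_neg (ne_of_gt hij)]
      norm_num)
  rw [Fin.eta] at hkey
  have hexp : Nm (e j - e i) = Nm (e j) - 2 * (inner ℝ (e j) (e i) : ℝ) + Nm (e i) := by
    simpa [Nm] using real_inner_sub_sub_self (e j) (e i)
  rw [hexp, real_inner_comm] at hkey
  linarith

/-- `N(e_last) ≤ N(v - ∑_{i ∈ S} e i)` for the half-sum vector `v`. -/
lemma sign_ineq (Λ : Submodule ℤ E) {n : ℕ} (hn : 0 < n) (e : Fin n → E)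
    (hmem : ∀ i, e i ∈ Λ) (hli : LinearIndependent ℝ e)
    (hN : ∀ i : Fin n, Nm (e i) = succMin Λ ((i : ℕ) + 1))
    (v : E) (hv : v = (2 : ℝ)⁻¹ • ∑ i, e i) (hvΛ : v ∈ Λ) (S : Finset (Fin n))
    (t : Fin n) (ht : (t : ℕ) = n - 1) :
    Nm (e t) ≤
      Nm (∑ i, (if i ∈ S then -(2 : ℝ)⁻¹ else (2 : ℝ)⁻¹) • e i) := by
  have hxc : (∑ i, (if i ∈ S then -(2 : ℝ)⁻¹ else (2 : ℝ)⁻¹) • e i) = v - ∑ i ∈ S, e i := by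
    rw [hv, Finset.smul_sum]
    rw [show (∑ i ∈ S, e i) = ∑ i : Fin n, (if i ∈ S then e i else 0) by
      rw [Finset.sum_ite_mem, Finset.univ_inter]]
    rw [← Finset.sum_sub_distrib]
    refine Finset.sum_congr rfl fun i _ => ?_
    by_cases h : i ∈ S <;> simp [h] <;> module
  have hmemx : (∑ i, (if i ∈ S then -(2 : ℝ)⁻¹ else (2 : ℝ)⁻¹) • e i) ∈ Λ := by
    rw [hxc]
    exact Submodule.sub_mem _ hvΛ (Submodule.sum_mem _ fun i _ => hmem i)
  have htt : t = ⟨n - 1, by omega⟩ := Fin.ext ht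
  rw [htt]
  refine key_ineq Λ e hmem hli hN (n - 1) (by omega) _ hmemx _ rfl ?_
  by_cases h : (⟨n - 1, by omega⟩ : Fin n) ∈ S <;> simp [h]

lemma general_bound (Λ : Submodule ℤ E) {n : ℕ} (hn : 0 < n) (e : Fin n → E)
    (hmem : ∀ i, e i ∈ Λ) (hli : LinearIndependent ℝ e)
    (hN : ∀ i : Fin n, Nm (e i) = succMin Λ ((i : ℕ) + 1))
    (v : E) (hv : v = (2 : ℝ)⁻¹ • ∑ i, e i) :
    Nm v ≤ (n : ℝ) * ((n : ℝ) + 1) / 8 * Nm (e ⟨n - 1, by omega⟩) := by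
  have lamMono : ∀ i j : Fin n, i ≤ j → Nm (e i) ≤ Nm (e j) := by
    intro i j hij
    rw [hN i, hN j]
    exact succMin_mono Λ e hmem hli (Nat.succ_pos _) (by
      have := Fin.le_def.mp hij; omega) (by have := j.isLt; omega)
  set L : ℝ := Nm (e ⟨n - 1, by omega⟩) with hLdef
  have hlast : ∀ i : Fin n, Nm (e i) ≤ L := fun i =>
    lamMono i ⟨n - 1, by omega⟩ (by rw [Fin.le_def]; simp; omega)
  have hbd : ∀ i j : Fin n, (inner ℝ (e i) (e j) : ℝ) ≤ if i = j then L else L / 2 := by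
    intro i j
    by_cases h : i = j
    · subst h; rw [if_pos rfl]
      exact le_trans (le_of_eq rfl) (hlast i)
    · rw [if_neg h]
      rcases lt_or_gt_of_ne h with hlt | hgt
      · have h1 := pair_ineq Λ e hmem hli hN i j hlt
        have h2 := hlast i
        linarith
      · have h1 := pair_ineq Λ e hmem hli hN j i hgt
        have h2 := hlast j
        rw [real_inner_comm] at h1
        linarith
  have hNmv : Nm v = 4⁻¹ * ∑ i, ∑ j, (inner ℝ (e i) (e j) : ℝ) := by
    rw [hv, show (2 : ℝ)⁻¹ • ∑ i, e i = ∑ i, ((2 : ℝ)⁻¹) • e i from Finset.smul_sum,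
      Nm_sum, Finset.mul_sum]
    refine Finset.sum_congr rfl fun i _ => ?_
    rw [Finset.mul_sum]
    refine Finset.sum_congr rfl fun j _ => by ring
  have hsum : (∑ i, ∑ j, (inner ℝ (e i) (e j) : ℝ)) ≤
      ∑ i : Fin n, ∑ j : Fin n, (if i = j then L else L / 2) :=
    Finset.sum_le_sum fun i _ => Finset.sum_le_sum fun j _ => hbd i j
  have hval : (∑ i : Fin n, ∑ j : Fin n, (if i = j then L else L / 2))
      = (n : ℝ) * ((n : ℝ) * (L / 2) + L / 2) := by
    have hrow : ∀ i : Fin n, (∑ j : Fin n, (if i = j then L else L / 2))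
        = (n : ℝ) * (L / 2) + L / 2 := by
      intro i
      have : ∀ j : Fin n, (if i = j then L else L / 2) = L / 2 + (if i = j then L / 2 else 0) := by
        intro j; by_cases h : i = j <;> simp [h] <;> ring
      rw [Finset.sum_congr rfl fun j _ => this j, Finset.sum_add_distrib,
        Finset.sum_ite_eq Finset.univ i (fun _ => L / 2), if_pos (Finset.mem_univ i),
        Finset.sum_const, Finset.card_univ, Fintype.card_fin, nsmul_eq_mul]
    rw [Finset.sum_congr rfl fun i _ => hrow i, Finset.sum_const, Finset.card_univ,
      Fintype.card_fin, nsmul_eq_mul]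
  have hL0 : 0 ≤ L := Nm_nonneg _
  rw [hNmv]
  calc 4⁻¹ * ∑ i, ∑ j, (inner ℝ (e i) (e j) : ℝ)
      ≤ 4⁻¹ * ((n : ℝ) * ((n : ℝ) * (L / 2) + L / 2)) := by
        rw [← hval]; linarith [hsum]
    _ = (n : ℝ) * ((n : ℝ) + 1) / 8 * L := by ring

set_option maxHeartbeats 1600000 in
/-- let `n ≥ 4`, let `(e₁,…,eₙ)` be a frame of successive minima for
a lattice `Λ` with `Λ = Λ' + ℤ·e`, `Λ'` the ℤ-span of the `eᵢ` and
`e = (e₁+⋯+eₙ)/2`. Then `N(e) ≤ (n(n+1)/8)·N(eₙ)`, and `N(e) ≤ N(e₄)` if `n = 4`,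
`N(e) ≤ (5/2)·N(e₅)` if `n = 5`, `N(e) ≤ 4·N(e₆)` if `n = 6`. -/
theorem norm_of_half_sum_bounds (n : ℕ) (hn : 4 ≤ n)
    (hE : Module.finrank ℝ E = n) (Λ : Submodule ℤ E) (hΛ : IsLattice n Λ)
    (e : Fin n → E) (hframe : IsSuccMinFrame Λ e)
    (v : E) (hv : v = (2 : ℝ)⁻¹ • ∑ i, e i)
    (hgen : Λ = Submodule.span ℤ (Set.range e ∪ {v})) :
    Nm v ≤ (n : ℝ) * ((n : ℝ) + 1) / 8 * Nm (e ⟨n - 1, by omega⟩) ∧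
      (∀ _ : n = 4, Nm v ≤ Nm (e ⟨3, by omega⟩)) ∧
      (∀ h : n = 5, Nm v ≤ 5 / 2 * Nm (e ⟨4, by omega⟩)) ∧
      (∀ h : n = 6, Nm v ≤ 4 * Nm (e ⟨5, by omega⟩)) := by
  obtain ⟨hmem, hli, hN⟩ := hframe
  have hvΛ : v ∈ Λ := by
    rw [hgen]
    exact Submodule.subset_span (Set.mem_union_right _ rfl)
  have hn0 : 0 < n := by omega
  refine ⟨general_bound Λ hn0 e hmem hli hN v hv, ?_, ?_, ?_⟩
  · intro h
    subst h
    show Nm v ≤ Nm (e 3)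
    have mono : ∀ i j : Fin 4, i ≤ j → Nm (e i) ≤ Nm (e j) := fun i j hij => by
      rw [hN i, hN j]
      exact succMin_mono Λ e hmem hli (Nat.succ_pos _)
        (by have := Fin.le_def.mp hij; omega) (by have := j.isLt; omega)
    have sgn : ∀ S : Finset (Fin 4),
        Nm (e 3) ≤ Nm (∑ i, (if i ∈ S then -(2 : ℝ)⁻¹ else (2 : ℝ)⁻¹) • e i) :=
      fun S => sign_ineq Λ (by norm_num) e hmem hli hN v hv hvΛ S 3 rfl
    have h1 := sgn {0, 1}
    have h2 := sgn {0, 2}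
    have h3 := sgn {1, 2}
    rw [Nm_sum] at h1
    simp (config := { decide := true }) only [Fin.sum_univ_five, Fin.sum_univ_six, Fin.sum_univ_four, Finset.mem_insert,
      Finset.mem_singleton] at h1
    norm_num at h1
    rw [Nm_sum] at h2
    simp (config := { decide := true }) only [Fin.sum_univ_five, Fin.sum_univ_six, Fin.sum_univ_four, Finset.mem_insert,
      Finset.mem_singleton] at h2
    norm_num at h2
    rw [Nm_sum] at h3
    simp (config := { decide := true }) only [Fin.sum_univ_five, Fin.sum_univ_six, Fin.sum_univ_four, Finset.mem_insert,
      Finset.mem_singleton] at h3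
    norm_num at h3
    have hNv : Nm v = ∑ i, ∑ j, (2 : ℝ)⁻¹ * (2 : ℝ)⁻¹ * (inner ℝ (e i) (e j) : ℝ) := by
      rw [hv, show (2 : ℝ)⁻¹ • ∑ i, e i = ∑ i, ((2 : ℝ)⁻¹) • e i from Finset.smul_sum, Nm_sum]
    simp only [Fin.sum_univ_four] at hNv
    norm_num at hNv
    have d0 : Nm (e 0) = (inner ℝ (e 0) (e 0) : ℝ) := rfl
    have d1 : Nm (e 1) = (inner ℝ (e 1) (e 1) : ℝ) := rfl
    have d2 : Nm (e 2) = (inner ℝ (e 2) (e 2) : ℝ) := rfl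
    have d3 : Nm (e 3) = (inner ℝ (e 3) (e 3) : ℝ) := rfl
    linarith [h1,
      h2,
      h3,
      hNv,
      d0,
      d1,
      d2,
      d3,
      real_inner_self_eq_norm_sq (e 0),
      real_inner_self_eq_norm_sq (e 1),
      real_inner_self_eq_norm_sq (e 2),
      real_inner_self_eq_norm_sq (e 3),
      mono 0 1 (by decide),
      mono 0 2 (by decide),
      mono 0 3 (by decide),
      mono 1 2 (by decide),
      mono 1 3 (by decide),
      mono 2 3 (by decide),
      real_inner_comm (e 0) (e 1),
      real_inner_comm (e 0) (e 2),
      real_inner_comm (e 0) (e 3),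
      real_inner_comm (e 1) (e 2),
      real_inner_comm (e 1) (e 3),
      real_inner_comm (e 2) (e 3)]
  · intro h
    subst h
    show Nm v ≤ 5 / 2 * Nm (e 4)
    have mono : ∀ i j : Fin 5, i ≤ j → Nm (e i) ≤ Nm (e j) := fun i j hij => by
      rw [hN i, hN j]
      exact succMin_mono Λ e hmem hli (Nat.succ_pos _)
        (by have := Fin.le_def.mp hij; omega) (by have := j.isLt; omega)
    have sgn : ∀ S : Finset (Fin 5),
        Nm (e 4) ≤ Nm (∑ i, (if i ∈ S then -(2 : ℝ)⁻¹ else (2 : ℝ)⁻¹) • e i) :=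
      fun S => sign_ineq Λ (by norm_num) e hmem hli hN v hv hvΛ S 4 rfl
    have h1 := sgn {0, 1}
    have h2 := sgn {0, 2}
    have h3 := sgn {0, 3}
    have h4 := sgn {1, 2}
    have h5 := sgn {1, 3}
    have h6 := sgn {2, 3}
    have h7 := sgn {0, 1, 2}
    have h8 := sgn {0, 1, 3}
    have h9 := sgn {0, 2, 3}
    have h10 := sgn {1, 2, 3}
    rw [Nm_sum] at h1
    simp (config := { decide := true }) only [Fin.sum_univ_five, Fin.sum_univ_six, Fin.sum_univ_four, Finset.mem_insert,
      Finset.mem_singleton] at h1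
    norm_num at h1
    rw [Nm_sum] at h2
    simp (config := { decide := true }) only [Fin.sum_univ_five, Fin.sum_univ_six, Fin.sum_univ_four, Finset.mem_insert,
      Finset.mem_singleton] at h2
    norm_num at h2
    rw [Nm_sum] at h3
    simp (config := { decide := true }) only [Fin.sum_univ_five, Fin.sum_univ_six, Fin.sum_univ_four, Finset.mem_insert,
      Finset.mem_singleton] at h3
    norm_num at h3
    rw [Nm_sum] at h4
    simp (config := { decide := true }) only [Fin.sum_univ_five, Fin.sum_univ_six, Fin.sum_univ_four, Finset.mem_insert,
      Finset.mem_singleton] at h4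
    norm_num at h4
    rw [Nm_sum] at h5
    simp (config := { decide := true }) only [Fin.sum_univ_five, Fin.sum_univ_six, Fin.sum_univ_four, Finset.mem_insert,
      Finset.mem_singleton] at h5
    norm_num at h5
    rw [Nm_sum] at h6
    simp (config := { decide := true }) only [Fin.sum_univ_five, Fin.sum_univ_six, Fin.sum_univ_four, Finset.mem_insert,
      Finset.mem_singleton] at h6
    norm_num at h6
    rw [Nm_sum] at h7
    simp (config := { decide := true }) only [Fin.sum_univ_five, Fin.sum_univ_six, Fin.sum_univ_four, Finset.mem_insert,
      Finset.mem_singleton] at h7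
    norm_num at h7
    rw [Nm_sum] at h8
    simp (config := { decide := true }) only [Fin.sum_univ_five, Fin.sum_univ_six, Fin.sum_univ_four, Finset.mem_insert,
      Finset.mem_singleton] at h8
    norm_num at h8
    rw [Nm_sum] at h9
    simp (config := { decide := true }) only [Fin.sum_univ_five, Fin.sum_univ_six, Fin.sum_univ_four, Finset.mem_insert,
      Finset.mem_singleton] at h9
    norm_num at h9
    rw [Nm_sum] at h10
    simp (config := { decide := true }) only [Fin.sum_univ_five, Fin.sum_univ_six, Fin.sum_univ_four, Finset.mem_insert,
      Finset.mem_singleton] at h10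
    norm_num at h10
    have hNv : Nm v = ∑ i, ∑ j, (2 : ℝ)⁻¹ * (2 : ℝ)⁻¹ * (inner ℝ (e i) (e j) : ℝ) := by
      rw [hv, show (2 : ℝ)⁻¹ • ∑ i, e i = ∑ i, ((2 : ℝ)⁻¹) • e i from Finset.smul_sum, Nm_sum]
    simp only [Fin.sum_univ_five] at hNv
    norm_num at hNv
    have d0 : Nm (e 0) = (inner ℝ (e 0) (e 0) : ℝ) := rfl
    have d1 : Nm (e 1) = (inner ℝ (e 1) (e 1) : ℝ) := rfl
    have d2 : Nm (e 2) = (inner ℝ (e 2) (e 2) : ℝ) := rfl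
    have d3 : Nm (e 3) = (inner ℝ (e 3) (e 3) : ℝ) := rfl
    have d4 : Nm (e 4) = (inner ℝ (e 4) (e 4) : ℝ) := rfl
    linarith [h1,
      h2,
      h3,
      h4,
      h5,
      h6,
      h7,
      h8,
      h9,
      h10,
      hNv,
      d0,
      d1,
      d2,
      d3,
      d4,
      real_inner_self_eq_norm_sq (e 0),
      real_inner_self_eq_norm_sq (e 1),
      real_inner_self_eq_norm_sq (e 2),
      real_inner_self_eq_norm_sq (e 3),
      real_inner_self_eq_norm_sq (e 4),
      mono 0 1 (by decide),
      mono 0 2 (by decide),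
      mono 0 3 (by decide),
      mono 0 4 (by decide),
      mono 1 2 (by decide),
      mono 1 3 (by decide),
      mono 1 4 (by decide),
      mono 2 3 (by decide),
      mono 2 4 (by decide),
      mono 3 4 (by decide),
      real_inner_comm (e 0) (e 1),
      real_inner_comm (e 0) (e 2),
      real_inner_comm (e 0) (e 3),
      real_inner_comm (e 0) (e 4),
      real_inner_comm (e 1) (e 2),
      real_inner_comm (e 1) (e 3),
      real_inner_comm (e 1) (e 4),
      real_inner_comm (e 2) (e 3),
      real_inner_comm (e 2) (e 4),
      real_inner_comm (e 3) (e 4)]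
  · intro h
    subst h
    show Nm v ≤ 4 * Nm (e 5)
    have mono : ∀ i j : Fin 6, i ≤ j → Nm (e i) ≤ Nm (e j) := fun i j hij => by
      rw [hN i, hN j]
      exact succMin_mono Λ e hmem hli (Nat.succ_pos _)
        (by have := Fin.le_def.mp hij; omega) (by have := j.isLt; omega)
    have sgn : ∀ S : Finset (Fin 6),
        Nm (e 5) ≤ Nm (∑ i, (if i ∈ S then -(2 : ℝ)⁻¹ else (2 : ℝ)⁻¹) • e i) :=
      fun S => sign_ineq Λ (by norm_num) e hmem hli hN v hv hvΛ S 5 rfl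
    have h1 := sgn {0, 1, 2}
    have h2 := sgn {0, 1, 3}
    have h3 := sgn {0, 1, 4}
    have h4 := sgn {0, 2, 3}
    have h5 := sgn {0, 2, 4}
    have h6 := sgn {0, 3, 4}
    have h7 := sgn {1, 2, 3}
    have h8 := sgn {1, 2, 4}
    have h9 := sgn {1, 3, 4}
    have h10 := sgn {2, 3, 4}
    rw [Nm_sum] at h1
    simp (config := { decide := true }) only [Fin.sum_univ_five, Fin.sum_univ_six, Fin.sum_univ_four, Finset.mem_insert,
      Finset.mem_singleton] at h1
    norm_num at h1
    rw [Nm_sum] at h2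
    simp (config := { decide := true }) only [Fin.sum_univ_five, Fin.sum_univ_six, Fin.sum_univ_four, Finset.mem_insert,
      Finset.mem_singleton] at h2
    norm_num at h2
    rw [Nm_sum] at h3
    simp (config := { decide := true }) only [Fin.sum_univ_five, Fin.sum_univ_six, Fin.sum_univ_four, Finset.mem_insert,
      Finset.mem_singleton] at h3
    norm_num at h3
    rw [Nm_sum] at h4
    simp (config := { decide := true }) only [Fin.sum_univ_five, Fin.sum_univ_six, Fin.sum_univ_four, Finset.mem_insert,
      Finset.mem_singleton] at h4
    norm_num at h4
    rw [Nm_sum] at h5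
    simp (config := { decide := true }) only [Fin.sum_univ_five, Fin.sum_univ_six, Fin.sum_univ_four, Finset.mem_insert,
      Finset.mem_singleton] at h5
    norm_num at h5
    rw [Nm_sum] at h6
    simp (config := { decide := true }) only [Fin.sum_univ_five, Fin.sum_univ_six, Fin.sum_univ_four, Finset.mem_insert,
      Finset.mem_singleton] at h6
    norm_num at h6
    rw [Nm_sum] at h7
    simp (config := { decide := true }) only [Fin.sum_univ_five, Fin.sum_univ_six, Fin.sum_univ_four, Finset.mem_insert,
      Finset.mem_singleton] at h7
    norm_num at h7
    rw [Nm_sum] at h8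
    simp (config := { decide := true }) only [Fin.sum_univ_five, Fin.sum_univ_six, Fin.sum_univ_four, Finset.mem_insert,
      Finset.mem_singleton] at h8
    norm_num at h8
    rw [Nm_sum] at h9
    simp (config := { decide := true }) only [Fin.sum_univ_five, Fin.sum_univ_six, Fin.sum_univ_four, Finset.mem_insert,
      Finset.mem_singleton] at h9
    norm_num at h9
    rw [Nm_sum] at h10
    simp (config := { decide := true }) only [Fin.sum_univ_five, Fin.sum_univ_six, Fin.sum_univ_four, Finset.mem_insert,
      Finset.mem_singleton] at h10
    norm_num at h10
    have hNv : Nm v = ∑ i, ∑ j, (2 : ℝ)⁻¹ * (2 : ℝ)⁻¹ * (inner ℝ (e i) (e j) : ℝ) := by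
      rw [hv, show (2 : ℝ)⁻¹ • ∑ i, e i = ∑ i, ((2 : ℝ)⁻¹) • e i from Finset.smul_sum, Nm_sum]
    simp only [Fin.sum_univ_six] at hNv
    norm_num at hNv
    have d0 : Nm (e 0) = (inner ℝ (e 0) (e 0) : ℝ) := rfl
    have d1 : Nm (e 1) = (inner ℝ (e 1) (e 1) : ℝ) := rfl
    have d2 : Nm (e 2) = (inner ℝ (e 2) (e 2) : ℝ) := rfl
    have d3 : Nm (e 3) = (inner ℝ (e 3) (e 3) : ℝ) := rfl
    have d4 : Nm (e 4) = (inner ℝ (e 4) (e 4) : ℝ) := rfl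
    have d5 : Nm (e 5) = (inner ℝ (e 5) (e 5) : ℝ) := rfl
    linarith [h1,
      h2,
      h3,
      h4,
      h5,
      h6,
      h7,
      h8,
      h9,
      h10,
      hNv,
      d0,
      d1,
      d2,
      d3,
      d4,
      d5,
      real_inner_self_eq_norm_sq (e 0),
      real_inner_self_eq_norm_sq (e 1),
      real_inner_self_eq_norm_sq (e 2),
      real_inner_self_eq_norm_sq (e 3),
      real_inner_self_eq_norm_sq (e 4),
      real_inner_self_eq_norm_sq (e 5),
      mono 0 1 (by decide),
      mono 0 2 (by decide),
      mono 0 3 (by decide),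
      mono 0 4 (by decide),
      mono 0 5 (by decide),
      mono 1 2 (by decide),
      mono 1 3 (by decide),
      mono 1 4 (by decide),
      mono 1 5 (by decide),
      mono 2 3 (by decide),
      mono 2 4 (by decide),
      mono 2 5 (by decide),
      mono 3 4 (by decide),
      mono 3 5 (by decide),
      mono 4 5 (by decide),
      real_inner_comm (e 0) (e 1),
      real_inner_comm (e 0) (e 2),
      real_inner_comm (e 0) (e 3),
      real_inner_comm (e 0) (e 4),
      real_inner_comm (e 0) (e 5),
      real_inner_comm (e 1) (e 2),
      real_inner_comm (e 1) (e 3),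
      real_inner_comm (e 1) (e 4),
      real_inner_comm (e 1) (e 5),
      real_inner_comm (e 2) (e 3),
      real_inner_comm (e 2) (e 4),
      real_inner_comm (e 2) (e 5),
      real_inner_comm (e 3) (e 4),
      real_inner_comm (e 3) (e 5),
      real_inner_comm (e 4) (e 5)]

end
end

section
/- Let Λ be a lattice in an n-dimensional real inner product space, let (e_1, …, e_n) be a frame of successive minima for Λ, let Λ' be the ℤ-span of the e_i, and suppose Λ = Λ' + ℤ·e with e = (e_1 + ⋯ + e_n)/d, where either d = 3 and 7 ≤ n ≤ 10, or d = 4 and 7 ≤ n ≤ 13. Then Q_b(Λ) < n/4. -/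
open scoped BigOperators
noncomputable section

variable {E : Type*} [NormedAddCommGroup E] [InnerProductSpace ℝ E]

lemma Nm_pos {x : E} (h : x ≠ 0) : 0 < Nm x := by
  have : Nm x = ‖x‖ ^ 2 := real_inner_self_eq_norm_sq x
  rw [this]; exact pow_pos (norm_pos_iff.mpr h) 2

lemma succMin_set_nonneg {k : ℕ} (hk : 0 < k) (Λ : Submodule ℤ E) :
    ∀ r ∈ { r : ℝ | ∃ w : Fin k → E, (∀ j, w j ∈ Λ) ∧ LinearIndependent ℝ w ∧
      ∀ j, Nm (w j) ≤ r }, 0 ≤ r := by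
  rintro r ⟨w, -, -, hb⟩
  exact le_trans (Nm_nonneg (w ⟨0, hk⟩)) (hb ⟨0, hk⟩)

lemma succMin_bddBelow {k : ℕ} (hk : 0 < k) (Λ : Submodule ℤ E) :
    BddBelow { r : ℝ | ∃ w : Fin k → E, (∀ j, w j ∈ Λ) ∧ LinearIndependent ℝ w ∧
      ∀ j, Nm (w j) ≤ r } :=
  ⟨0, fun r hr => succMin_set_nonneg hk Λ r hr⟩

lemma succMin_nonneg {k : ℕ} (hk : 0 < k) (Λ : Submodule ℤ E) : 0 ≤ succMin Λ k :=
  Real.sInf_nonneg (succMin_set_nonneg hk Λ)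

lemma succMin_le_of_witness {k : ℕ} (hk : 0 < k) (Λ : Submodule ℤ E) {r : ℝ}
    (w : Fin k → E) (hw : ∀ j, w j ∈ Λ) (hind : LinearIndependent ℝ w)
    (hb : ∀ j, Nm (w j) ≤ r) : succMin Λ k ≤ r :=
  csInf_le (succMin_bddBelow hk Λ) ⟨w, hw, hind, hb⟩

lemma succMin_mono_s19 {k m : ℕ} (hk : 0 < k) (hkm : k ≤ m) (Λ : Submodule ℤ E)
    (w : Fin m → E) (hw : ∀ j, w j ∈ Λ) (hind : LinearIndependent ℝ w) :
    succMin Λ k ≤ succMin Λ m := by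
  apply csInf_le_csInf (succMin_bddBelow hk Λ)
  · exact ⟨∑ j, Nm (w j), w, hw, hind, fun j =>
      Finset.single_le_sum (f := fun j => Nm (w j)) (fun i _ => Nm_nonneg _)
        (Finset.mem_univ j)⟩
  · rintro r ⟨u, hu, huind, hub⟩
    exact ⟨fun j => u (Fin.castLE hkm j), fun j => hu _,
      huind.comp _ (Fin.castLE_injective hkm), fun j => hub _⟩

/-- Sorting argument: the product of the norms of any `n` linearly independent
vectors of `Λ` is at least the product of the successive minima. -/
lemma prod_succMin_le {n : ℕ} (Λ : Submodule ℤ E) (w : Fin n → E)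
    (hw : ∀ i, w i ∈ Λ) (hind : LinearIndependent ℝ w) :
    ∏ i : Fin n, succMin Λ ((i : ℕ) + 1) ≤ ∏ i, Nm (w i) := by
  classical
  set f : Fin n → ℝ := fun i => Nm (w i) with hf
  set σ := Tuple.sort f with hσ
  have hmono : Monotone (f ∘ σ) := Tuple.monotone_sort f
  have hprod : ∏ i, Nm (w i) = ∏ i, Nm (w (σ i)) :=
    (Equiv.prod_comp σ fun i => Nm (w i)).symm
  rw [hprod]
  apply Finset.prod_le_prod
  · intro i _
    exact succMin_nonneg (Nat.succ_pos _) Λ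
  · intro i _
    apply succMin_le_of_witness (Nat.succ_pos _) Λ
      (fun j : Fin ((i : ℕ) + 1) => w (σ (Fin.castLE i.2 j)))
    · intro j; exact hw _
    · exact hind.comp _ ((σ.injective).comp (Fin.castLE_injective _))
    · intro j
      exact hmono (show Fin.castLE i.2 j ≤ i from by
        simpa [Fin.le_def] using Nat.lt_succ_iff.mp j.2)

/-- The Gram determinant of a linearly independent family of `n` vectors in an
`n`-dimensional space is positive. -/
lemma gramDet_pos {n : ℕ} (hn : 0 < n) (hE : Module.finrank ℝ E = n)
    {w : Fin n → E} (hind : LinearIndependent ℝ w) : 0 < gramDet w := by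
  classical
  have hfd : FiniteDimensional ℝ E := FiniteDimensional.of_finrank_pos (by omega)
  let ob := (stdOrthonormalBasis ℝ E).reindex (finCongr hE)
  let A : Matrix (Fin n) (Fin n) ℝ := Matrix.of fun k i => (inner ℝ (ob k) (w i) : ℝ)
  have hG : (Matrix.of fun i j : Fin n => (inner ℝ (w i) (w j) : ℝ)) = A.transpose * A := by
    ext i j
    have := ob.sum_inner_mul_inner (w i) (w j)
    simp only [Matrix.mul_apply, Matrix.transpose_apply, Matrix.of_apply, A]
    rw [← this]
    congr 1
    ext k
    rw [real_inner_comm (w i) (ob k)]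
  have hA : A = ob.toBasis.toMatrix w := by
    ext k i
    simp [A, Module.Basis.toMatrix_apply, OrthonormalBasis.coe_toBasis_repr_apply,
      OrthonormalBasis.repr_apply_apply]
  haveI : Nonempty (Fin n) := ⟨⟨0, hn⟩⟩
  have hspan : Submodule.span ℝ (Set.range w) = ⊤ :=
    LinearIndependent.span_eq_top_of_card_eq_finrank hind (by simp [hE])
  have hunit : IsUnit (ob.toBasis.det w) :=
    (Module.Basis.is_basis_iff_det ob.toBasis).mp ⟨hind, hspan⟩
  have hdetA : A.det ≠ 0 := by
    rw [hA, ← Module.Basis.det_apply]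
    exact hunit.ne_zero
  have : gramDet w = A.det ^ 2 := by
    rw [gramDet, hG, Matrix.det_mul, Matrix.det_transpose, sq]
  rw [this]
  exact lt_of_le_of_ne (sq_nonneg _) (Ne.symm (pow_ne_zero 2 hdetA))

/-- Replacing `e l` by a translate of `v` in the generating family yields a ℤ-basis. -/
lemma zbasis_swap {n d : ℕ} (hd : 0 < d) (hE : Module.finrank ℝ E = n)
    (Λ : Submodule ℤ E) (htop : Submodule.span ℝ (Λ : Set E) = ⊤)
    (e : Fin n → E) (v : E) (hv : v = ((d : ℝ))⁻¹ • ∑ i, e i)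
    (hgen : Λ = Submodule.span ℤ (Set.range e ∪ {v}))
    (l : Fin n) (a : Fin n → Bool) (hal : a l = false) :
    IsZBasis Λ (fun i => if i = l then v - ∑ j, (if a j then (1:ℤ) else 0) • e j else e i) := by
  classical
  set z : E := ∑ j, (if a j then (1:ℤ) else 0) • e j with hz
  set u : Fin n → E := fun i => if i = l then v - z else e i with hu
  have hd0 : ((d : ℕ) : ℝ) ≠ 0 := Nat.cast_ne_zero.mpr hd.ne'
  have hdv : ((d : ℕ) : ℤ) • v = ∑ i, e i := by
    have h1 : ((d : ℕ) : ℝ) • v = ∑ i, e i := by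
      rw [hv, smul_inv_smul₀ hd0]
    rw [← h1, ← Int.cast_smul_eq_zsmul ℝ]
    norm_num
  have humem : ∀ i, u i ∈ Submodule.span ℤ (Set.range u) :=
    fun i => Submodule.subset_span ⟨i, rfl⟩
  have hspanu : Submodule.span ℤ (Set.range u) = Λ := by
    have he' : ∀ i, i ≠ l → e i ∈ Submodule.span ℤ (Set.range u) := by
      intro i hi
      have : u i = e i := by simp [hu, hi]
      exact this ▸ humem i
    have hzmem : z ∈ Submodule.span ℤ (Set.range u) := by
      rw [hz]
      refine Submodule.sum_mem _ fun j _ => ?_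
      by_cases hj : a j = true
      · have hjl : j ≠ l := fun h => by rw [h, hal] at hj; exact Bool.false_ne_true hj
        simpa [hj] using he' j hjl
      · simp [hj]
    have hvmem : v ∈ Submodule.span ℤ (Set.range u) := by
      have : v = u l + z := by simp [hu, hz]
      rw [this]
      exact Submodule.add_mem _ (humem l) hzmem
    have helmem : e l ∈ Submodule.span ℤ (Set.range u) := by
      have hsum : ∑ i, e i = e l + ∑ i ∈ Finset.univ.erase l, e i :=
        (Finset.add_sum_erase _ _ (Finset.mem_univ l)).symm
      have : e l = ((d : ℕ) : ℤ) • v - ∑ i ∈ Finset.univ.erase l, e i := by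
        rw [hdv, hsum]; abel
      rw [this]
      exact Submodule.sub_mem _ (Submodule.smul_mem _ _ hvmem)
        (Submodule.sum_mem _ fun i hi => he' i (Finset.ne_of_mem_erase hi))
    apply le_antisymm
    · apply Submodule.span_le.2
      rintro x ⟨i, rfl⟩
      by_cases hi : i = l
      · have : u i = v - z := by simp [hu, hi]
        rw [hgen, this]
        refine Submodule.sub_mem _ (Submodule.subset_span (Or.inr rfl)) ?_
        exact Submodule.sum_mem _ fun j _ =>
          Submodule.smul_mem _ _ (Submodule.subset_span (Or.inl ⟨j, rfl⟩))
      · have : u i = e i := by simp [hu, hi]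
        rw [hgen, this]
        exact Submodule.subset_span (Or.inl ⟨i, rfl⟩)
    · rw [hgen]
      apply Submodule.span_le.2
      rintro x (⟨i, rfl⟩ | rfl)
      · by_cases hi : i = l
        · exact hi ▸ helmem
        · exact he' i hi
      · exact hvmem
  have hind : LinearIndependent ℝ u := by
    have h1 : (Λ : Set E) ⊆ (Submodule.span ℝ (Set.range u) : Set E) := by
      rw [← hspanu]
      exact Submodule.span_subset_span ℤ ℝ _
    have htople : ⊤ ≤ Submodule.span ℝ (Set.range u) := by
      rw [← htop]
      exact Submodule.span_le.2 h1
    exact linearIndependent_of_top_le_span_of_card_eq_finrank htople (by simp [hE])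
  exact ⟨hind, hspanu⟩

lemma Nm_sum_smul {n : ℕ} (t : Fin n → ℝ) (e : Fin n → E) :
    Nm (∑ i, t i • e i) = ∑ i, ∑ j, (t i * t j) * (inner ℝ (e i) (e j) : ℝ) := by
  simp only [Nm, sum_inner, inner_sum, real_inner_smul_left, real_inner_smul_right]
  exact Finset.sum_congr rfl fun i _ => Finset.sum_congr rfl fun j _ => by
    rw [real_inner_comm (e j) (e i)]; ring

/-- Averaging argument: some translate of `v` by a subsum of the `e i` (not using
`e l`) has small norm. -/
lemma exists_good_rep {n : ℕ} {d : ℕ} (hd : 2 ≤ d) (e : Fin n → E) (v : E)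
    (hv : v = ((d : ℝ))⁻¹ • ∑ i, e i) (l : Fin n) :
    ∃ a : Fin n → Bool, a l = false ∧
      Nm (v - ∑ j, (if a j then (1:ℤ) else 0) • e j) ≤
        (((d : ℝ) - 1)/(d : ℝ)^2) * ∑ i ∈ Finset.univ.erase l, Nm (e i)
          + ((d : ℝ)^2)⁻¹ * Nm (e l) := by
  classical
  set dr : ℝ := (d : ℝ) with hdr
  have hdr2 : (2 : ℝ) ≤ dr := by rw [hdr]; exact_mod_cast hd
  have hdrpos : 0 < dr := by linarith
  have hdr0 : dr ≠ 0 := ne_of_gt hdrpos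
  have hinv_lt : dr⁻¹ < 1 := by
    rw [inv_lt_one_iff₀]; right; linarith
  have hinv_nonneg : 0 ≤ dr⁻¹ := inv_nonneg.2 hdrpos.le
  set c : Bool → ℝ := fun b => dr⁻¹ - (if b then 1 else 0) with hc
  set p : Fin n → Bool → ℝ := fun i b =>
    if i = l then (if b then 0 else 1) else (if b then dr⁻¹ else 1 - dr⁻¹) with hp
  set g : Fin n → Fin n → ℝ := fun i j => (inner ℝ (e i) (e j) : ℝ) with hg
  set w : (Fin n → Bool) → ℝ := fun a => ∏ i, p i (a i) with hw
  set x : (Fin n → Bool) → E := fun a => ∑ i, c (a i) • e i with hx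
  have hrep : ∀ a : Fin n → Bool, v - ∑ j, (if a j then (1:ℤ) else 0) • e j = x a := by
    intro a
    rw [hv, Finset.smul_sum, ← Finset.sum_sub_distrib]
    apply Finset.sum_congr rfl
    intro j _
    cases ha : a j <;> simp [hx, hc, ha, sub_smul]
  have hp_nonneg : ∀ i b, 0 ≤ p i b := by
    intro i b
    by_cases hi : i = l <;> cases b <;> simp [hp, hi] <;> linarith
  have hp_sum : ∀ i, p i true + p i false = 1 := by
    intro i
    by_cases hi : i = l <;> simp [hp, hi]
  have hwsum : ∑ a : Fin n → Bool, w a = 1 := by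
    rw [hw]
    calc ∑ a : Fin n → Bool, ∏ i, p i (a i) = ∏ i, ∑ b, p i b :=
          (Fintype.prod_sum p).symm
      _ = 1 := Finset.prod_eq_one fun i _ => by rw [Fintype.sum_bool]; exact hp_sum i
  have hdiag : ∀ i : Fin n, (∑ a : Fin n → Bool, w a * (c (a i) * c (a i)))
      = if i = l then (dr^2)⁻¹ else (dr - 1)/dr^2 := by
    intro i
    have hterm : ∀ a : Fin n → Bool, w a * (c (a i) * c (a i))
        = ∏ k, (p k (a k) * (if k = i then c (a k) * c (a k) else 1)) := by
      intro a
      rw [Finset.prod_mul_distrib]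
      congr 1
      simp [Finset.prod_ite_eq' Finset.univ i (fun k => c (a k) * c (a k))]
    rw [Finset.sum_congr rfl fun a _ => hterm a,
      (Fintype.prod_sum (fun k (b : Bool) => p k b * (if k = i then c b * c b else 1))).symm]
    have hk : ∀ k : Fin n, (∑ b, p k b * (if k = i then c b * c b else 1))
        = if k = i then (if i = l then (dr^2)⁻¹ else (dr - 1)/dr^2) else 1 := by
      intro k
      by_cases hki : k = i
      · subst hki
        by_cases hkl : k = l
        · simp [Fintype.sum_bool, hp, hc, hkl]
          field_simp
        · simp [Fintype.sum_bool, hp, hc, hkl]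
          field_simp
          ring
      · simp only [hki, if_false, mul_one]
        rw [Fintype.sum_bool]
        exact hp_sum k
    rw [Finset.prod_congr rfl fun k _ => hk k]
    simp [Finset.prod_ite_eq' Finset.univ i
      (fun _ => if i = l then (dr^2)⁻¹ else (dr - 1)/dr^2)]
  have hoff : ∀ i j : Fin n, i ≠ j → (∑ a : Fin n → Bool, w a * (c (a i) * c (a j))) = 0 := by
    intro i j hij
    have hterm : ∀ a : Fin n → Bool, w a * (c (a i) * c (a j))
        = ∏ k, (p k (a k) * (if k = i then c (a k) else 1) * (if k = j then c (a k) else 1)) := by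
      intro a
      rw [Finset.prod_mul_distrib, Finset.prod_mul_distrib]
      rw [Finset.prod_ite_eq' Finset.univ i (fun k => c (a k)),
        Finset.prod_ite_eq' Finset.univ j (fun k => c (a k))]
      simp [hw, mul_assoc]
    rw [Finset.sum_congr rfl fun a _ => hterm a,
      (Fintype.prod_sum (fun k (b : Bool) =>
        p k b * (if k = i then c b else 1) * (if k = j then c b else 1))).symm]
    obtain ⟨k0, hk0m, hk0l⟩ : ∃ k0 : Fin n, (k0 = i ∨ k0 = j) ∧ k0 ≠ l := by
      by_cases hil : i = l
      · exact ⟨j, Or.inr rfl, fun h => hij (hil.trans h.symm)⟩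
      · exact ⟨i, Or.inl rfl, hil⟩
    apply Finset.prod_eq_zero (Finset.mem_univ k0)
    rcases hk0m with rfl | rfl
    · simp only [if_pos rfl, if_neg hij]
      rw [Fintype.sum_bool]
      simp [hp, hc, hk0l]
      ring
    · simp only [if_pos rfl, if_neg (Ne.symm hij)]
      rw [Fintype.sum_bool]
      simp [hp, hc, hk0l]
      ring
  have hNm : ∀ a : Fin n → Bool, Nm (x a) = ∑ i, ∑ j, (c (a i) * c (a j)) * g i j := by
    intro a
    simp only [hg, hx]
    exact Nm_sum_smul (fun i => c (a i)) e
  have hmain : ∑ a : Fin n → Bool, w a * Nm (x a)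
      = ((dr - 1)/dr^2) * ∑ i ∈ Finset.univ.erase l, Nm (e i) + (dr^2)⁻¹ * Nm (e l) := by
    have h1 : ∑ a : Fin n → Bool, w a * Nm (x a)
        = ∑ a : Fin n → Bool, ∑ i, ∑ j, w a * ((c (a i) * c (a j)) * g i j) := by
      apply Finset.sum_congr rfl
      intro a _
      rw [hNm a, Finset.mul_sum]
      exact Finset.sum_congr rfl fun i _ => by rw [Finset.mul_sum]
    rw [h1, Finset.sum_comm]
    have h2 : ∀ i : Fin n, (∑ a : Fin n → Bool, ∑ j, w a * ((c (a i) * c (a j)) * g i j))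
        = (if i = l then (dr^2)⁻¹ else (dr - 1)/dr^2) * g i i := by
      intro i
      rw [Finset.sum_comm]
      have h3 : ∀ j : Fin n, (∑ a : Fin n → Bool, w a * ((c (a i) * c (a j)) * g i j))
          = (∑ a : Fin n → Bool, w a * (c (a i) * c (a j))) * g i j := by
        intro j
        rw [Finset.sum_mul]
        exact Finset.sum_congr rfl fun a _ => by ring
      rw [Finset.sum_congr rfl fun j _ => h3 j]
      rw [Finset.sum_eq_single i]
      · rw [hdiag i]
      · intro j _ hji
        rw [hoff i j (Ne.symm hji), zero_mul]
      · intro h; exact absurd (Finset.mem_univ i) h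
    rw [Finset.sum_congr rfl fun i _ => h2 i]
    rw [← Finset.add_sum_erase _ _ (Finset.mem_univ l)]
    have hgNm : ∀ i : Fin n, g i i = Nm (e i) := fun i => rfl
    rw [if_pos rfl, hgNm, Finset.mul_sum]
    rw [Finset.sum_congr rfl fun i hi => by
      rw [if_neg (Finset.ne_of_mem_erase hi), hgNm]]
    rw [← Finset.mul_sum]
    ring
  -- existence via the weighted average
  by_contra hcon
  push_neg at hcon
  set A : ℝ := ((dr - 1)/dr^2) * ∑ i ∈ Finset.univ.erase l, Nm (e i)
      + (dr^2)⁻¹ * Nm (e l) with hA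
  have hcon' : ∀ a : Fin n → Bool, a l = false → A < Nm (x a) := by
    intro a ha
    have := hcon a ha
    rwa [hrep a] at this
  set a0 : Fin n → Bool := fun _ => false with ha0
  have hwa0 : 0 < w a0 := by
    rw [hw]
    apply Finset.prod_pos
    intro i _
    by_cases hi : i = l <;> simp [hp, hi, a0] <;> linarith
  have hwnn : ∀ a, 0 ≤ w a := fun a => Finset.prod_nonneg fun i _ => hp_nonneg i (a i)
  have hwl : ∀ a : Fin n → Bool, a l = true → w a = 0 := by
    intro a ha
    rw [hw]
    exact Finset.prod_eq_zero (Finset.mem_univ l) (by simp [hp, ha])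
  have hle : ∀ a ∈ (Finset.univ : Finset (Fin n → Bool)), w a * A ≤ w a * Nm (x a) := by
    intro a _
    cases ha : a l
    · exact mul_le_mul_of_nonneg_left (hcon' a ha).le (hwnn a)
    · rw [hwl a ha, zero_mul, zero_mul]
  have hstrict : ∑ a : Fin n → Bool, w a * A < ∑ a : Fin n → Bool, w a * Nm (x a) :=
    Finset.sum_lt_sum hle ⟨a0, Finset.mem_univ _,
      mul_lt_mul_of_pos_left (hcon' a0 rfl) hwa0⟩
  rw [← Finset.sum_mul, hwsum, one_mul, hmain] at hstrict
  exact lt_irrefl A hstrict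

/-- let `(e₁,…,eₙ)` be a frame of successive minima for a lattice
`Λ` with `Λ = Λ' + ℤ·e`, `Λ'` the ℤ-span of the `eᵢ`, `e = (e₁+⋯+eₙ)/d`, where
`d = 3` and `7 ≤ n ≤ 10`, or `d = 4` and `7 ≤ n ≤ 13`. Then `Q_b(Λ) < n/4`. -/
theorem index_three_four_strict_bound (n d : ℕ)
    (hcase : (d = 3 ∧ 7 ≤ n ∧ n ≤ 10) ∨ (d = 4 ∧ 7 ≤ n ∧ n ≤ 13))
    (hE : Module.finrank ℝ E = n) (Λ : Submodule ℤ E) (hΛ : IsLattice n Λ)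
    (e : Fin n → E) (hframe : IsSuccMinFrame Λ e)
    (v : E) (hv : v = ((d : ℝ))⁻¹ • ∑ i, e i)
    (hgen : Λ = Submodule.span ℤ (Set.range e ∪ {v})) :
    Qb n Λ < (n : ℝ) / 4 := by
  classical
  have hd34 : d = 3 ∨ d = 4 := by
    rcases hcase with ⟨h, _⟩ | ⟨h, _⟩
    exacts [Or.inl h, Or.inr h]
  have hn7 : 7 ≤ n := by
    rcases hcase with ⟨_, h, _⟩ | ⟨_, h, _⟩ <;> exact h
  have hd2 : 2 ≤ d := by rcases hd34 with rfl | rfl <;> norm_num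
  have hn0 : 0 < n := by omega
  have hn4pos : (0 : ℝ) < (n : ℝ) / 4 := by
    have : (0 : ℝ) < (n : ℝ) := by exact_mod_cast hn0
    linarith
  obtain ⟨w₀, hw₀span, hw₀ind, hw₀gen⟩ := hΛ
  obtain ⟨heΛ, heind, hemin⟩ := hframe
  set l : Fin n := ⟨n - 1, by omega⟩ with hl
  have hl1 : (l : ℕ) + 1 = n := by simp only [hl]; omega
  have hNe : ∀ i, 0 < Nm (e i) := fun i => Nm_pos (heind.ne_zero i)
  have htop : Submodule.span ℝ (Λ : Set E) = ⊤ := by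
    apply eq_top_iff.2
    have hsub : Set.range w₀ ⊆ (Λ : Set E) := by
      rintro _ ⟨i, rfl⟩
      rw [← hw₀gen]
      exact Submodule.subset_span ⟨i, rfl⟩
    calc (⊤ : Submodule ℝ E) = Submodule.span ℝ (Set.range w₀) := hw₀span.symm
      _ ≤ Submodule.span ℝ (Λ : Set E) := Submodule.span_mono hsub
  by_cases hD0 : latDet n Λ = 0
  · -- degenerate case: every element of the `Hb` set is `0`
    have hset : {q : ℝ | ∃ vb : Fin n → E, IsZBasis Λ vb ∧
        q = (∏ i, Nm (vb i)) / latDet n Λ} = {0} := by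
      apply Set.eq_singleton_iff_unique_mem.2
      constructor
      · exact ⟨w₀, ⟨hw₀ind, hw₀gen⟩, by rw [hD0, div_zero]⟩
      · rintro q ⟨vb, -, rfl⟩
        rw [hD0, div_zero]
    have hHb : Hb n Λ = 0 := by rw [Hb, hset, csInf_singleton]
    rw [Qb, hHb, zero_div]
    exact hn4pos
  · have hDpos : 0 < latDet n Λ := by
      have hSmem : gramDet w₀ ∈ {q : ℝ | ∃ vb : Fin n → E, IsZBasis Λ vb ∧ q = gramDet vb} :=
        ⟨w₀, ⟨hw₀ind, hw₀gen⟩, rfl⟩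
      by_cases hbdd : BddAbove {q : ℝ | ∃ vb : Fin n → E, IsZBasis Λ vb ∧ q = gramDet vb}
      · have h1 : gramDet w₀ ≤ latDet n Λ := le_csSup hbdd hSmem
        have h2 : 0 < gramDet w₀ := gramDet_pos hn0 hE hw₀ind
        linarith
      · exact absurd (by rw [latDet]; exact Real.sSup_of_not_bddAbove hbdd) hD0
    have hmono : ∀ i : Fin n, Nm (e i) ≤ Nm (e l) := by
      intro i
      rw [hemin i, hemin l, hl1]
      exact succMin_mono_s19 (Nat.succ_pos _) (by omega) Λ e heΛ heind
    obtain ⟨a, hal, hNv'⟩ := exists_good_rep hd2 e v hv l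
    set v' : E := v - ∑ j, (if a j then (1:ℤ) else 0) • e j with hv'
    have hsum_le : ∑ i ∈ Finset.univ.erase l, Nm (e i) ≤ ((n : ℝ) - 1) * Nm (e l) := by
      have hcard : (Finset.univ.erase l).card = n - 1 := by
        rw [Finset.card_erase_of_mem (Finset.mem_univ l), Finset.card_univ, Fintype.card_fin]
      calc ∑ i ∈ Finset.univ.erase l, Nm (e i)
          ≤ (Finset.univ.erase l).card • Nm (e l) :=
            Finset.sum_le_card_nsmul _ _ _ fun i _ => hmono i
        _ = ((n : ℝ) - 1) * Nm (e l) := by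
            rw [hcard, nsmul_eq_mul, Nat.cast_sub (by omega)]
            norm_num
    have hkey : Nm v' < (n : ℝ) / 4 * Nm (e l) := by
      have hco : (0 : ℝ) ≤ ((d : ℝ) - 1) / (d : ℝ)^2 := by
        have h2d : (2 : ℝ) ≤ (d : ℝ) := by exact_mod_cast hd2
        apply div_nonneg (by linarith) (by positivity)
      have h1 : Nm v' ≤ ((d : ℝ) - 1)/(d : ℝ)^2 * (((n : ℝ) - 1) * Nm (e l))
          + ((d : ℝ)^2)⁻¹ * Nm (e l) :=
        le_trans hNv' (add_le_add_left (mul_le_mul_of_nonneg_left hsum_le hco) _)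
      have hn7' : (7 : ℝ) ≤ (n : ℝ) := by exact_mod_cast hn7
      rcases hd34 with rfl | rfl <;> push_cast at h1 ⊢ <;> nlinarith [hNe l]
    have hbasis := zbasis_swap (show 0 < d by omega) hE Λ htop e v hv hgen l a hal
    have hHb_le : Hb n Λ ≤
        ((∏ i ∈ Finset.univ.erase l, Nm (e i)) * Nm v') / latDet n Λ := by
      rw [Hb]
      apply csInf_le
      · refine ⟨0, ?_⟩
        rintro q ⟨vb, -, rfl⟩
        exact div_nonneg (Finset.prod_nonneg fun i _ => Nm_nonneg _) hDpos.le
      · refine ⟨_, hbasis, ?_⟩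
        congr 1
        rw [hv']
        rw [← Finset.mul_prod_erase _ _ (Finset.mem_univ l), if_pos rfl]
        have herase : ∏ i ∈ Finset.univ.erase l,
            Nm (if i = l then v - ∑ j, (if a j then (1:ℤ) else 0) • e j else e i)
            = ∏ i ∈ Finset.univ.erase l, Nm (e i) :=
          Finset.prod_congr rfl fun i hi => by simp [Finset.ne_of_mem_erase hi]
        rw [herase]
        ring
    set P : ℝ := ∏ i, Nm (e i) with hP
    have hPpos : 0 < P := Finset.prod_pos fun i _ => hNe i
    have hMl_ge : P / latDet n Λ ≤ Mlat n Λ := by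
      rw [Mlat]
      apply le_csInf
      · exact ⟨_, e, heΛ, heind, rfl⟩
      · rintro q ⟨wv, hwv, hwvind, rfl⟩
        rw [div_le_div_iff_of_pos_right hDpos]
        have hPe : P = ∏ i : Fin n, succMin Λ ((i : ℕ) + 1) :=
          Finset.prod_congr rfl fun i _ => hemin i
        rw [hPe]
        exact prod_succMin_le Λ wv hwv hwvind
    have hMpos : 0 < Mlat n Λ := lt_of_lt_of_le (div_pos hPpos hDpos) hMl_ge
    rw [Qb, div_lt_iff₀ hMpos]
    have hprodpos : 0 < ∏ i ∈ Finset.univ.erase l, Nm (e i) :=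
      Finset.prod_pos fun i _ => hNe i
    calc Hb n Λ ≤ ((∏ i ∈ Finset.univ.erase l, Nm (e i)) * Nm v') / latDet n Λ := hHb_le
      _ < ((n : ℝ) / 4 * P) / latDet n Λ := by
          apply div_lt_div_of_pos_right ?_ hDpos
          have hPe2 : P = Nm (e l) * ∏ i ∈ Finset.univ.erase l, Nm (e i) :=
            (Finset.mul_prod_erase _ _ (Finset.mem_univ l)).symm
          rw [hPe2]
          calc (∏ i ∈ Finset.univ.erase l, Nm (e i)) * Nm v'
              < (∏ i ∈ Finset.univ.erase l, Nm (e i)) * ((n : ℝ) / 4 * Nm (e l)) :=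
                mul_lt_mul_of_pos_left hkey hprodpos
            _ = (n : ℝ) / 4 * (Nm (e l) * ∏ i ∈ Finset.univ.erase l, Nm (e i)) := by ring
      _ = (n : ℝ) / 4 * (P / latDet n Λ) := by ring
      _ ≤ (n : ℝ) / 4 * Mlat n Λ := mul_le_mul_of_nonneg_left hMl_ge hn4pos.le

end
end
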